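/- Let M, N be unit intervals of abelian lattice-ordered groups with unit, with MV-operations as above, and let s : M → N satisfy s(1) = 1. Then s is a state (s(a ⊕ b) = s(a) + s(b) whenever a ⊙ b = 0, addition in the ambient group) if and only if s satisfies: (A1) s(a ⊕ b) = s(a) ⊕ s(b ∧ ¬a), (A2) s(¬a) = ¬s(a), and (A3) s(1) = 1, for all a, b ∈ M. -/

import Mathlib

/-- Proposition on equational characterisation of states:
For s mapping the unit interval of G into the unit interval of H with s(1) = 1,
s is a state (s(a ⊕ b) = s(a) + s(b) whenever a ⊙ b = 0, + in the ambient group,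
which includes s(a) + s(b) ≤ 1) iff s satisfies (A1) s(a ⊕ b) = s(a) ⊕ s(b ∧ ¬a),
(A2) s(¬a) = ¬s(a), and (A3) s(1) = 1. -/
theorem state_iff_equational
    {G H : Type*} [Lattice G] [AddCommGroup G]
    [CovariantClass G G (· + ·) (· ≤ ·)]
    [Lattice H] [AddCommGroup H]
    [CovariantClass H H (· + ·) (· ≤ ·)]
    (uG : G) (huG : 0 ≤ uG) (uH : H) (huH : 0 ≤ uH)
    (s : G → H)
    (hrange : ∀ a : G, 0 ≤ a → a ≤ uG → 0 ≤ s a ∧ s a ≤ uH)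
    (hunit : s uG = uH) :
    (∀ a b : G, 0 ≤ a → a ≤ uG → 0 ≤ b → b ≤ uG →
        (a + b - uG) ⊔ 0 = 0 →
        s ((a + b) ⊓ uG) = s a + s b ∧ s a + s b ≤ uH)
    ↔
    ((∀ a b : G, 0 ≤ a → a ≤ uG → 0 ≤ b → b ≤ uG →
        s ((a + b) ⊓ uG) = (s a + s (b ⊓ (uG - a))) ⊓ uH) ∧
     (∀ a : G, 0 ≤ a → a ≤ uG → s (uG - a) = uH - s a) ∧
     s uG = uH) := by
  constructor
  · intro hS
    refine ⟨?_, ?_, hunit⟩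
    · intro a b ha hau hb hbu
      set c := b ⊓ (uG - a) with hc
      have hc0 : 0 ≤ c := le_inf hb (sub_nonneg.mpr hau)
      have hcu : c ≤ uG := le_trans inf_le_left hbu
      have hac : a + c ≤ uG := by
        calc a + c ≤ a + (uG - a) := add_le_add_right inf_le_right a
        _ = uG := by abel
      have hzero : (a + c - uG) ⊔ 0 = 0 := sup_eq_right.mpr (sub_nonpos.mpr hac)
      obtain ⟨heq, hle⟩ := hS a c ha hau hc0 hcu hzero
      have key : a + c = (a + b) ⊓ uG := by
        rw [hc, add_inf, add_sub_cancel]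
      have : (a + c) ⊓ uG = (a + b) ⊓ uG := by
        rw [key, inf_assoc, inf_idem]
      rw [this] at heq
      rw [heq, inf_eq_left.mpr hle]
    · intro a ha hau
      have h1 : a + (uG - a) = uG := by abel
      have hzero : (a + (uG - a) - uG) ⊔ 0 = 0 := by
        rw [h1, sub_self, sup_idem]
      obtain ⟨heq, _⟩ := hS a (uG - a) ha hau (sub_nonneg.mpr hau)
        (sub_le_self uG ha) hzero
      rw [h1, inf_idem, hunit] at heq
      exact (eq_sub_of_add_eq' heq.symm)
  · rintro ⟨hA1, hA2, -⟩ a b ha hau hb hbu hzero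
    have hab : a + b ≤ uG := by
      have := le_sup_left (a := a + b - uG) (b := (0 : G))
      rw [hzero] at this
      exact sub_nonpos.mp this
    have hmono : ∀ x y : G, 0 ≤ x → y ≤ uG → x ≤ y → s x ≤ s y := by
      intro x y hx hyu hxy
      have hd0 : 0 ≤ y - x := sub_nonneg.mpr hxy
      have hdu : y - x ≤ uG := le_trans (sub_le_self y hx) hyu
      have h1 := hA1 x (y - x) hx (le_trans hxy hyu) hd0 hdu
      have h2 : x + (y - x) = y := by abel
      have h3 : (y - x) ⊓ (uG - x) = y - x :=
        inf_eq_left.mpr (sub_le_sub_right hyu x)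
      rw [h2, h3, inf_eq_left.mpr hyu] at h1
      rw [h1]
      exact le_inf (le_add_of_nonneg_right
        (hrange (y - x) hd0 hdu).1) (hrange x hx (le_trans hxy hyu)).2
    have hb' : b ≤ uG - a := le_sub_iff_add_le'.mpr hab
    have hsb : s b ≤ uH - s a := by
      rw [← hA2 a ha hau]
      exact hmono b (uG - a) hb (sub_le_self uG ha) hb'
    have hle : s a + s b ≤ uH := by
      have := add_le_add_right hsb (s a)
      rwa [add_sub_cancel] at this
    refine ⟨?_, hle⟩
    have h1 := hA1 a b ha hau hb hbu
    rw [inf_eq_left.mpr hb'] at h1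
    rw [h1, inf_eq_left.mpr hle]
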